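/- Let α > 0, let β̄ ≥ 0, γ̄ ≥ 0 satisfy 0 < α + β̄ < π, 0 < 2α + γ̄ < π and sin(β̄) ≠ 0. Set w = sin(α)/sin(α + β̄), y = sin(β̄)/sin(α + β̄), and for real γ define F(γ) = w + (3/4)·y·sin(2α)/sin(2α + γ) + (1/2)·y·sin(γ)/sin(2α + γ). If F has derivative 0 at γ̄, then cos(2α + γ̄) = 2/3. -/

import Mathlib

open Real

theorem stmt9 (α β γ : ℝ) (hα : 0 < α) (hβ : 0 ≤ β) (hγ : 0 ≤ γ)
    (h1 : 0 < α + β) (h2 : α + β < π) (h3 : 0 < 2 * α + γ) (h4 : 2 * α + γ < π)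
    (hsβ : sin β ≠ 0)
    (hF : HasDerivAt (fun g : ℝ =>
        sin α / sin (α + β)
          + 3 / 4 * (sin β / sin (α + β)) * sin (2 * α) / sin (2 * α + g)
          + 1 / 2 * (sin β / sin (α + β)) * sin g / sin (2 * α + g)) 0 γ) :
    cos (2 * α + γ) = 2 / 3 := by
  have hs1 : 0 < sin (α + β) := sin_pos_of_pos_of_lt_pi h1 h2
  have hs2 : 0 < sin (2 * α + γ) := sin_pos_of_pos_of_lt_pi h3 h4
  have h2a : 0 < sin (2 * α) := sin_pos_of_pos_of_lt_pi (by linarith) (by linarith)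
  have hd : HasDerivAt (fun g : ℝ => sin (2 * α + g)) (cos (2 * α + γ)) γ := by
    have := ((hasDerivAt_id γ).const_add (2 * α)).sin
    simpa using this
  have hA : HasDerivAt (fun g : ℝ => 3 / 4 * (sin β / sin (α + β)) * sin (2 * α) / sin (2 * α + g))
      ((0 * sin (2 * α + γ) - 3 / 4 * (sin β / sin (α + β)) * sin (2 * α) * cos (2 * α + γ)) /
        (sin (2 * α + γ)) ^ 2) γ :=
    (hasDerivAt_const γ _).div hd hs2.ne'
  have hB : HasDerivAt (fun g : ℝ => 1 / 2 * (sin β / sin (α + β)) * sin g / sin (2 * α + g))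
      ((1 / 2 * (sin β / sin (α + β)) * cos γ * sin (2 * α + γ) -
        1 / 2 * (sin β / sin (α + β)) * sin γ * cos (2 * α + γ)) / (sin (2 * α + γ)) ^ 2) γ := by
    have hn : HasDerivAt (fun g : ℝ => 1 / 2 * (sin β / sin (α + β)) * sin g)
        (1 / 2 * (sin β / sin (α + β)) * cos γ) γ := (hasDerivAt_sin γ).const_mul _
    exact hn.div hd hs2.ne'
  have hsum := ((hasDerivAt_const γ (sin α / sin (α + β))).add hA).add hB
  have heq := hF.unique hsum
  have key : sin (2 * α) = sin (2 * α + γ) * cos γ - cos (2 * α + γ) * sin γ := by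
    have h := sin_sub (2 * α + γ) γ
    rw [show 2 * α + γ - γ = 2 * α by ring] at h
    exact h
  have hβpos : 0 < β := lt_of_le_of_ne hβ (by rintro rfl; simp at hsβ)
  have hsb : 0 < sin β := sin_pos_of_pos_of_lt_pi hβpos (by linarith)
  have P : 0 < sin β * sin (2 * α) * (sin (α + β) * sin (2 * α + γ) ^ 2) := by positivity
  field_simp at heq
  have h0 : sin β * sin (2 * α) * (sin (α + β) * sin (2 * α + γ) ^ 2) *
      (4 - 6 * cos (2 * α + γ)) = 0 := by
    linear_combination (-(sin (α + β) * sin (2 * α + γ) ^ 2)) * heq + 4 * sin β * (sin (α + β) * sin (2 * α + γ) ^ 2) * key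
  rcases mul_eq_zero.mp h0 with h | h
  · exact absurd h P.ne'
  · linarith
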